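/- For every subset J ⊆ {1,…,l}, one has T_J = T ∩ P, where T is the Tits cone and P = {x ∈ ℝ^l : ⟨w(e_i), x⟩_B ≥ 0 for all w ∈ W_J and all i ∉ J}. -/

import Mathlib

open Matrix Finset

/-- The Gram matrix `B` with `B i i = 1` and `B i k = -(b i k)/2` for `i ≠ k`. -/
noncomputable def gramB (l : ℕ) (b : Fin l → Fin l → ℝ) : Matrix (Fin l) (Fin l) ℝ :=
  fun i k => if i = k then 1 else -(b i k) / 2

/-- The bilinear form `⟨v, w⟩_B = vᵀ B w`. -/
noncomputable def bform (l : ℕ) (b : Fin l → Fin l → ℝ) (v w : Fin l → ℝ) : ℝ :=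
  dotProduct v ((gramB l b).mulVec w)

/-- The matrix `M j` of the reflection `σ j (w) = w - 2⟨w, e j⟩_B e j`: it agrees with
the identity except in row `j`, where `(M j) j j = -1` and `(M j) j k = b j k` for `k ≠ j`. -/
noncomputable def reflM (l : ℕ) (b : Fin l → Fin l → ℝ) (j : Fin l) :
    Matrix (Fin l) (Fin l) ℝ :=
  fun r c => if r = j then (if c = j then -1 else b j c) else (if r = c then 1 else 0)

/-- The subgroup `W_J` generated by the reflections `σ j`, `j ∈ J` (since each `σ j` is an
involution, it coincides with the submonoid generated by them). -/
noncomputable def WJ (l : ℕ) (b : Fin l → Fin l → ℝ) (J : Set (Fin l)) :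
    Submonoid (Matrix (Fin l) (Fin l) ℝ) :=
  Submonoid.closure (reflM l b '' J)

/-- The fundamental chamber `D = {x : ⟨x, e i⟩_B ≥ 0 for all i}`. -/
noncomputable def chamberD (l : ℕ) (b : Fin l → Fin l → ℝ) : Set (Fin l → ℝ) :=
  {x | ∀ i : Fin l, 0 ≤ bform l b x (Pi.single i 1)}

/-- The cone `T_J = ⋃_{w ∈ W_J} w(D)`. -/
noncomputable def TJ (l : ℕ) (b : Fin l → Fin l → ℝ) (J : Set (Fin l)) : Set (Fin l → ℝ) :=
  {y | ∃ w ∈ WJ l b J, ∃ x ∈ chamberD l b, y = w.mulVec x}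

/-! ### Auxiliary development -/

namespace TitsAux

variable {l : ℕ} {b : Fin l → Fin l → ℝ}

/-- The product of the reflections along a word. -/
noncomputable def wprod (l : ℕ) (b : Fin l → Fin l → ℝ) (L : List (Fin l)) :
    Matrix (Fin l) (Fin l) ℝ := (L.map (reflM l b)).prod

@[simp] lemma wprod_nil : wprod l b [] = 1 := rfl

lemma wprod_cons (j : Fin l) (L : List (Fin l)) :
    wprod l b (j :: L) = reflM l b j * wprod l b L := by
  simp [wprod]

lemma wprod_single (j : Fin l) : wprod l b [j] = reflM l b j := by
  simp [wprod]

lemma wprod_append (L1 L2 : List (Fin l)) :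
    wprod l b (L1 ++ L2) = wprod l b L1 * wprod l b L2 := by
  simp [wprod]

lemma reflM_mulVec_ne {j r : Fin l} (h : r ≠ j) (x : Fin l → ℝ) :
    ((reflM l b j) *ᵥ x) r = x r := by
  simp [Matrix.mulVec, dotProduct, reflM, h, ite_mul, Finset.sum_ite_eq]

lemma reflM_mulVec_self (j : Fin l) (x : Fin l → ℝ) :
    ((reflM l b j) *ᵥ x) j = -x j + ∑ k ∈ Finset.univ.erase j, b j k * x k := by
  have h : ((reflM l b j) *ᵥ x) j = ∑ c, (if c = j then -1 else b j c) * x c := by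
    simp [Matrix.mulVec, dotProduct, reflM]
  rw [h, ← Finset.add_sum_erase _ _ (Finset.mem_univ j), if_pos rfl]
  have h2 : ∑ c ∈ Finset.univ.erase j, (if c = j then (-1:ℝ) else b j c) * x c
      = ∑ c ∈ Finset.univ.erase j, b j c * x c :=
    Finset.sum_congr rfl fun c hc => by rw [if_neg (Finset.mem_erase.mp hc).1]
  rw [h2]; ring

lemma reflM_invol (j : Fin l) (x : Fin l → ℝ) :
    (reflM l b j) *ᵥ ((reflM l b j) *ᵥ x) = x := by
  funext r
  by_cases h : r = j
  · subst h
    rw [reflM_mulVec_self, reflM_mulVec_self]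
    have h2 : ∑ k ∈ Finset.univ.erase r, b r k * ((reflM l b r) *ᵥ x) k
        = ∑ k ∈ Finset.univ.erase r, b r k * x k :=
      Finset.sum_congr rfl fun k hk => by
        rw [reflM_mulVec_ne (Finset.mem_erase.mp hk).1]
    rw [h2]; ring
  · rw [reflM_mulVec_ne h, reflM_mulVec_ne h]

lemma reflM_mul_self (j : Fin l) : reflM l b j * reflM l b j = 1 := by
  ext r c
  have h := congrFun (reflM_invol (b := b) j (Pi.single c 1)) r
  rw [Matrix.mulVec_mulVec] at h
  simpa [Matrix.mulVec_single, Matrix.one_apply, Pi.single_apply] using h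

lemma gramB_symm (hsym : ∀ i j, i ≠ j → b i j = b j i) (i k : Fin l) :
    gramB l b i k = gramB l b k i := by
  rcases eq_or_ne i k with rfl | h
  · rfl
  · simp only [gramB, if_neg h, if_neg (Ne.symm h)]
    rw [hsym i k h]

lemma bform_eq_sum (v w : Fin l → ℝ) :
    bform l b v w = ∑ i, ∑ k, v i * (gramB l b i k * w k) := by
  simp [bform, dotProduct, Matrix.mulVec, Finset.mul_sum]

lemma bform_symm (hsym : ∀ i j, i ≠ j → b i j = b j i) (v w : Fin l → ℝ) :
    bform l b v w = bform l b w v := by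
  rw [bform_eq_sum, bform_eq_sum, Finset.sum_comm]
  refine Finset.sum_congr rfl fun i _ => Finset.sum_congr rfl fun k _ => ?_
  rw [gramB_symm hsym k i]; ring

lemma bform_single_left (k : Fin l) (x : Fin l → ℝ) :
    bform l b (Pi.single k 1) x = ((gramB l b) *ᵥ x) k := by
  simp [bform, single_dotProduct]

lemma bform_nonneg_of (hsym : ∀ i j, i ≠ j → b i j = b j i) {x v : Fin l → ℝ}
    (hx : x ∈ chamberD l b) (hv : ∀ k, 0 ≤ v k) : 0 ≤ bform l b v x := by
  have hBx : ∀ k, 0 ≤ ((gramB l b) *ᵥ x) k := fun k => by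
    have h := hx k
    rwa [bform_symm hsym, bform_single_left] at h
  simp only [bform, dotProduct]
  exact Finset.sum_nonneg fun i _ => mul_nonneg (hv i) (hBx i)

lemma bform_single_single (j : Fin l) :
    bform l b (Pi.single j 1) (Pi.single j 1) = 1 := by
  simp [bform, single_dotProduct, Matrix.mulVec_single, gramB]

lemma two_bform_single_right (hsym : ∀ i j, i ≠ j → b i j = b j i) (x : Fin l → ℝ) (j : Fin l) :
    2 * bform l b x (Pi.single j 1) = 2 * x j - ∑ k ∈ Finset.univ.erase j, b j k * x k := by
  simp only [bform, Matrix.mulVec_single, dotProduct, Finset.mul_sum, Pi.smul_apply,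
    Matrix.col_apply, op_smul_eq_mul]
  rw [← Finset.add_sum_erase _ (fun i => 2 * (x i * (gramB l b i j * 1))) (Finset.mem_univ j)]
  have h1 : (2:ℝ) * (x j * (gramB l b j j * 1)) = 2 * x j := by
    simp [gramB]
  have h2 : ∑ i ∈ Finset.univ.erase j, 2 * (x i * (gramB l b i j * 1))
      = ∑ i ∈ Finset.univ.erase j, -(b j i * x i) := by
    refine Finset.sum_congr rfl fun i hi => ?_
    have h := (Finset.mem_erase.mp hi).1
    rw [show gramB l b i j = -(b i j)/2 from if_neg h, hsym i j h]; ring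
  rw [h1, h2, Finset.sum_neg_distrib]
  ring

lemma reflM_mulVec_eq (hsym : ∀ i j, i ≠ j → b i j = b j i) (j : Fin l) (x : Fin l → ℝ) :
    (reflM l b j) *ᵥ x = x - (2 * bform l b x (Pi.single j 1)) • (Pi.single j 1 : Fin l → ℝ) := by
  funext r
  by_cases h : r = j
  · subst h
    rw [reflM_mulVec_self]
    simp only [Pi.sub_apply, Pi.smul_apply, Pi.single_eq_same, smul_eq_mul, mul_one]
    rw [two_bform_single_right hsym]
    ring
  · rw [reflM_mulVec_ne h]
    simp [Pi.single_eq_of_ne h]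

lemma bform_sub_smul_expand (v w : Fin l → ℝ) (a c : ℝ) (j : Fin l) :
    bform l b (v - a • (Pi.single j 1 : Fin l → ℝ)) (w - c • (Pi.single j 1 : Fin l → ℝ))
      = bform l b v w - c * bform l b v (Pi.single j 1)
        - a * bform l b (Pi.single j 1) w + a * c := by
  have h1 := bform_single_single (b := b) j
  simp only [bform, Matrix.mulVec_sub, Matrix.mulVec_smul, dotProduct_sub,
    sub_dotProduct, dotProduct_smul, smul_dotProduct, smul_eq_mul] at *
  rw [h1]
  ring

lemma bform_reflM_reflM (hsym : ∀ i j, i ≠ j → b i j = b j i) (j : Fin l) (v w : Fin l → ℝ) :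
    bform l b ((reflM l b j) *ᵥ v) ((reflM l b j) *ᵥ w) = bform l b v w := by
  rw [reflM_mulVec_eq hsym j v, reflM_mulVec_eq hsym j w, bform_sub_smul_expand,
    bform_symm hsym (Pi.single j 1) w]
  ring

lemma bform_reflM_left (hsym : ∀ i j, i ≠ j → b i j = b j i) (j : Fin l) (v w : Fin l → ℝ) :
    bform l b ((reflM l b j) *ᵥ v) w = bform l b v ((reflM l b j) *ᵥ w) := by
  conv_lhs => rw [← reflM_invol (b := b) j w]
  rw [bform_reflM_reflM hsym]

lemma bform_wprod_left (hsym : ∀ i j, i ≠ j → b i j = b j i) (L : List (Fin l)) :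
    ∀ v w, bform l b ((wprod l b L) *ᵥ v) w = bform l b v ((wprod l b L.reverse) *ᵥ w) := by
  induction L with
  | nil => intro v w; simp [wprod]
  | cons j L ih =>
    intro v w
    rw [wprod_cons, ← Matrix.mulVec_mulVec, bform_reflM_left hsym, ih,
      Matrix.mulVec_mulVec, List.reverse_cons, wprod_append, wprod_single]

lemma bform_wprod_right (hsym : ∀ i j, i ≠ j → b i j = b j i) (L : List (Fin l))
    (v w : Fin l → ℝ) :
    bform l b v ((wprod l b L) *ᵥ w) = bform l b ((wprod l b L.reverse) *ᵥ v) w := by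
  have h := bform_wprod_left hsym L.reverse v w
  rw [List.reverse_reverse] at h
  exact h.symm

/-- Key positivity lemma: if `j :: L` is a reduced word (adjacent letters distinct) whose
last letter is not `i`, then `w(e i)` is componentwise nonnegative, at least `1` in
coordinate `j`, and coordinate `j` is the largest. -/
lemma lemA_strong (hge : ∀ i j, i ≠ j → 2 ≤ b i j) (i : Fin l) (L : List (Fin l)) :
    ∀ j : Fin l, List.Chain' (· ≠ ·) (j :: L) →
      (j :: L).getLast (List.cons_ne_nil j L) ≠ i →
      (1 ≤ ((wprod l b (j :: L)) *ᵥ Pi.single i 1) j) ∧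
      (∀ k, 0 ≤ ((wprod l b (j :: L)) *ᵥ Pi.single i 1) k ∧
            ((wprod l b (j :: L)) *ᵥ Pi.single i 1) k
              ≤ ((wprod l b (j :: L)) *ᵥ Pi.single i 1) j) := by
  induction L with
  | nil =>
    intro j hc hlast
    have hji : j ≠ i := by simpa using hlast
    have hv : ∀ r, ((wprod l b [j]) *ᵥ Pi.single i 1) r
        = if r = j then b j i else (Pi.single i 1 : Fin l → ℝ) r := by
      intro r
      rw [wprod_single]
      by_cases h : r = j
      · subst h
        rw [if_pos rfl, reflM_mulVec_self]
        have : ∑ k ∈ Finset.univ.erase r, b r k * (Pi.single i 1 : Fin l → ℝ) k = b r i := by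
          have : ∀ k ∈ Finset.univ.erase r, b r k * (Pi.single i 1 : Fin l → ℝ) k
              = if k = i then b r k else 0 := by
            intro k _
            rcases eq_or_ne k i with rfl | h
            · simp
            · simp [Pi.single_eq_of_ne h, h]
          rw [Finset.sum_congr rfl this, Finset.sum_ite_eq',
            if_pos (Finset.mem_erase.mpr ⟨Ne.symm hji, Finset.mem_univ i⟩)]
        rw [this]
        simp [Pi.single_eq_of_ne hji]
      · rw [if_neg h, reflM_mulVec_ne h]
    have hbji : (2:ℝ) ≤ b j i := hge j i hji
    constructor
    · rw [hv j, if_pos rfl]; linarith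
    · intro k
      rw [hv k, hv j, if_pos rfl]
      by_cases h : k = j
      · rw [if_pos h]; constructor <;> linarith
      · rw [if_neg h]
        rcases eq_or_ne k i with rfl | h2
        · simp only [Pi.single_eq_same]; constructor <;> linarith
        · simp only [Pi.single_eq_of_ne h2]; constructor <;> linarith
  | cons j' L ih =>
    intro j hc hlast
    have hjj' : j ≠ j' := (List.isChain_cons_cons.mp hc).1
    have hc' : List.Chain' (· ≠ ·) (j' :: L) := (List.isChain_cons_cons.mp hc).2
    have hlast' : (j' :: L).getLast (List.cons_ne_nil j' L) ≠ i := by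
      rwa [List.getLast_cons (List.cons_ne_nil j' L)] at hlast
    obtain ⟨ih1, ih2⟩ := ih j' hc' hlast'
    set u := (wprod l b (j' :: L)) *ᵥ Pi.single i (1:ℝ) with hu
    have hv : (wprod l b (j :: j' :: L)) *ᵥ Pi.single i (1:ℝ) = (reflM l b j) *ᵥ u := by
      rw [wprod_cons, ← Matrix.mulVec_mulVec]
    rw [hv]
    have hsum : b j j' * u j' ≤ ∑ k ∈ Finset.univ.erase j, b j k * u k := by
      refine Finset.single_le_sum (f := fun k => b j k * u k) (fun k hk => ?_)
        (Finset.mem_erase.mpr ⟨Ne.symm hjj', Finset.mem_univ j'⟩)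
      have hk' := (Finset.mem_erase.mp hk).1
      exact mul_nonneg (by linarith [hge j k (Ne.symm hk')]) (ih2 k).1
    have hbjj' : (2:ℝ) ≤ b j j' := hge j j' hjj'
    have huj' : (1:ℝ) ≤ u j' := ih1
    have hujle : u j ≤ u j' := (ih2 j).2
    have hvj : ((reflM l b j) *ᵥ u) j = -u j + ∑ k ∈ Finset.univ.erase j, b j k * u k :=
      reflM_mulVec_self j u
    have hvj_ge : u j' ≤ ((reflM l b j) *ᵥ u) j := by
      rw [hvj]
      have h2u : 2 * u j' ≤ b j j' * u j' := mul_le_mul_of_nonneg_right hbjj' (ih2 j').1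
      linarith
    constructor
    · linarith
    · intro k
      by_cases h : k = j
      · subst h; constructor <;> linarith
      · rw [reflM_mulVec_ne h]
        exact ⟨(ih2 k).1, le_trans (ih2 k).2 hvj_ge⟩

lemma lemA (hge : ∀ i j, i ≠ j → 2 ≤ b i j) (i : Fin l) (L : List (Fin l))
    (hc : List.Chain' (· ≠ ·) L) (hlast : ∀ h : L ≠ [], L.getLast h ≠ i) :
    ∀ k, 0 ≤ ((wprod l b L) *ᵥ Pi.single i 1) k := by
  cases L with
  | nil =>
    intro k
    rw [wprod_nil, Matrix.one_mulVec]
    rcases eq_or_ne k i with rfl | h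
    · simp
    · simp [Pi.single_eq_of_ne h]
  | cons j L =>
    exact fun k =>
      ((lemA_strong hge i L j hc (hlast (List.cons_ne_nil j L))).2 k).1

lemma reflM_mulVec_single_self (j : Fin l) :
    (reflM l b j) *ᵥ (Pi.single j (1:ℝ)) = -Pi.single j 1 := by
  funext r
  by_cases h : r = j
  · subst h
    rw [reflM_mulVec_self]
    have : ∑ k ∈ Finset.univ.erase r, b r k * (Pi.single r 1 : Fin l → ℝ) k = 0 := by
      refine Finset.sum_eq_zero fun k hk => ?_
      rw [Pi.single_eq_of_ne (Finset.mem_erase.mp hk).1, mul_zero]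
    rw [this]
    simp
  · rw [reflM_mulVec_ne h]
    simp [Pi.single_eq_of_ne h]

/-- Descent: if the reduced word for `w` starts with `j` and `x ∈ D`, then
`⟨e j, w x⟩ ≤ 0`. -/
lemma descent (hsym : ∀ i j, i ≠ j → b i j = b j i) (hge : ∀ i j, i ≠ j → 2 ≤ b i j)
    {x : Fin l → ℝ} (hx : x ∈ chamberD l b) (j : Fin l) (L : List (Fin l))
    (hc : List.Chain' (· ≠ ·) (j :: L)) :
    bform l b (Pi.single j 1) ((wprod l b (j :: L)) *ᵥ x) ≤ 0 := by
  rw [bform_wprod_right hsym, List.reverse_cons, wprod_append, wprod_single,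
    ← Matrix.mulVec_mulVec, reflM_mulVec_single_self, Matrix.mulVec_neg]
  have hc2 : List.Chain' (· ≠ ·) L.reverse := by
    rw [List.Chain', List.isChain_reverse]
    exact hc.tail.imp fun _ _ hab => Ne.symm hab
  have hlast : ∀ h : L.reverse ≠ [], L.reverse.getLast h ≠ j := by
    cases L with
    | nil => intro h; simp at h
    | cons a L' =>
      intro h
      rw [List.getLast_reverse h]
      simp only [List.head_cons]
      exact Ne.symm (List.isChain_cons_cons.mp hc).1
  have hpos := lemA hge j L.reverse hc2 hlast
  have h0 := bform_nonneg_of hsym hx hpos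
  rw [show bform l b (-((wprod l b L.reverse) *ᵥ Pi.single j 1)) x
      = -(bform l b ((wprod l b L.reverse) *ᵥ Pi.single j 1) x) from by
    simp [bform, neg_dotProduct]]
  linarith

/-! ### Word reduction -/

def consRed (a : Fin l) : List (Fin l) → List (Fin l)
  | [] => [a]
  | c :: R => if a = c then R else a :: c :: R

def red : List (Fin l) → List (Fin l)
  | [] => []
  | a :: L => consRed a (red L)

@[simp] lemma consRed_nil (a : Fin l) : consRed a [] = [a] := rfl

@[simp] lemma consRed_cons (a c : Fin l) (R : List (Fin l)) :
    consRed a (c :: R) = if a = c then R else a :: c :: R := rfl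

lemma red_cons (a : Fin l) (L : List (Fin l)) : red (a :: L) = consRed a (red L) := rfl

lemma chain'_red (L : List (Fin l)) : List.Chain' (· ≠ ·) (red L) := by
  induction L with
  | nil => exact List.isChain_nil
  | cons a L ih =>
    rw [red_cons]
    cases h : red L with
    | nil => exact List.isChain_singleton a
    | cons c R =>
      rw [h] at ih
      rw [consRed_cons]
      by_cases hac : a = c
      · rw [if_pos hac]; exact ih.tail
      · rw [if_neg hac]; exact List.isChain_cons_cons.mpr ⟨hac, ih⟩

lemma wprod_red (L : List (Fin l)) : wprod l b (red L) = wprod l b L := by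
  induction L with
  | nil => rfl
  | cons a L ih =>
    rw [red_cons, wprod_cons, ← ih]
    cases h : red L with
    | nil => rw [consRed_nil, wprod_single, wprod_nil, mul_one]
    | cons c R =>
      rw [consRed_cons]
      by_cases hac : a = c
      · subst hac
        rw [if_pos rfl, wprod_cons, ← mul_assoc, reflM_mul_self, one_mul]
      · rw [if_neg hac, wprod_cons]

lemma mem_of_mem_red (L : List (Fin l)) : ∀ x ∈ red L, x ∈ L := by
  induction L with
  | nil => simp [red]
  | cons a L ih =>
    intro x hx
    rw [red_cons] at hx
    cases h : red L with
    | nil =>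
      rw [h, consRed_nil] at hx
      simp only [List.mem_singleton] at hx
      simp [hx]
    | cons c R =>
      rw [h, consRed_cons] at hx
      by_cases hac : a = c
      · rw [if_pos hac] at hx
        refine List.mem_cons_of_mem a (ih x ?_)
        rw [h]
        exact List.mem_cons_of_mem c hx
      · rw [if_neg hac] at hx
        rcases List.mem_cons.mp hx with rfl | hx2
        · exact List.mem_cons_self
        · refine List.mem_cons_of_mem a (ih x ?_)
          rw [h]
          exact hx2

/-! ### Membership in `W_J` -/

lemma wprod_mem (J : Set (Fin l)) (L : List (Fin l)) (hL : ∀ x ∈ L, x ∈ J) :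
    wprod l b L ∈ WJ l b J := by
  induction L with
  | nil => exact one_mem _
  | cons a L ih =>
    rw [wprod_cons]
    exact mul_mem (Submonoid.subset_closure ⟨a, hL a (List.mem_cons_self), rfl⟩)
      (ih fun x hx => hL x (List.mem_cons_of_mem a hx))

lemma exists_list_of_prod (J : Set (Fin l)) :
    ∀ m : List (Matrix (Fin l) (Fin l) ℝ), (∀ y ∈ m, y ∈ reflM l b '' J) →
      ∃ L : List (Fin l), (∀ x ∈ L, x ∈ J) ∧ wprod l b L = m.prod := by
  intro m
  induction m with
  | nil => exact fun _ => ⟨[], by simp, rfl⟩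
  | cons A m ih =>
    intro hm
    obtain ⟨L, hL, hwL⟩ := ih fun y hy => hm y (List.mem_cons_of_mem A hy)
    obtain ⟨a, haJ, rfl⟩ := hm A (List.mem_cons_self)
    refine ⟨a :: L, ?_, ?_⟩
    · intro x hx
      rcases List.mem_cons.mp hx with rfl | h
      · exact haJ
      · exact hL x h
    · rw [wprod_cons, hwL, List.prod_cons]

lemma exists_list_of_mem (J : Set (Fin l)) {w : Matrix (Fin l) (Fin l) ℝ}
    (hw : w ∈ WJ l b J) :
    ∃ L : List (Fin l), (∀ x ∈ L, x ∈ J) ∧ wprod l b L = w := by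
  obtain ⟨m, hm, hprod⟩ := Submonoid.exists_list_of_mem_closure hw
  obtain ⟨L, hL, hwL⟩ := exists_list_of_prod J m hm
  exact ⟨L, hL, by rw [hwL, hprod]⟩

/-- The key induction for the hard inclusion. -/
lemma key (hsym : ∀ i j, i ≠ j → b i j = b j i) (hge : ∀ i j, i ≠ j → 2 ≤ b i j)
    (J : Set (Fin l)) :
    ∀ L : List (Fin l), List.Chain' (· ≠ ·) L → ∀ x ∈ chamberD l b,
      (∀ u ∈ WJ l b J, ∀ i : Fin l, i ∉ J →
        0 ≤ bform l b (u *ᵥ Pi.single i 1) ((wprod l b L) *ᵥ x)) →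
      (wprod l b L) *ᵥ x ∈ TJ l b J := by
  intro L
  induction L with
  | nil =>
    intro _ x hx _
    exact ⟨1, one_mem _, x, hx, by simp⟩
  | cons j L ih =>
    intro hc x hx hP
    by_cases hj : j ∈ J
    · have hMj : reflM l b j ∈ WJ l b J := Submonoid.subset_closure ⟨j, hj, rfl⟩
      have hy' : (wprod l b L) *ᵥ x ∈ TJ l b J := by
        apply ih hc.tail x hx
        intro u hu i hi
        have h1 := hP (reflM l b j * u) (mul_mem hMj hu) i hi
        rwa [wprod_cons, ← Matrix.mulVec_mulVec, ← Matrix.mulVec_mulVec,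
          bform_reflM_reflM hsym] at h1
      obtain ⟨u, hu, x', hx', hy⟩ := hy'
      refine ⟨reflM l b j * u, mul_mem hMj hu, x', hx', ?_⟩
      rw [wprod_cons, ← Matrix.mulVec_mulVec, hy, Matrix.mulVec_mulVec]
    · have h0 : bform l b (Pi.single j 1) ((wprod l b (j :: L)) *ᵥ x) = 0 := by
        have hle := descent hsym hge hx j L hc
        have hge0 := hP 1 (one_mem _) j hj
        rw [Matrix.one_mulVec] at hge0
        linarith
      have hfix : (wprod l b L) *ᵥ x = (wprod l b (j :: L)) *ᵥ x := by
        have h1 : (reflM l b j) *ᵥ ((wprod l b (j :: L)) *ᵥ x) = (wprod l b L) *ᵥ x := by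
          rw [wprod_cons, ← Matrix.mulVec_mulVec, reflM_invol]
        rw [← h1, reflM_mulVec_eq hsym,
          show bform l b ((wprod l b (j :: L)) *ᵥ x) (Pi.single j 1) = 0 from by
            rw [bform_symm hsym]; exact h0]
        simp
      rw [← hfix]
      exact ih hc.tail x hx fun u hu i hi => by rw [hfix]; exact hP u hu i hi

end TitsAux

open TitsAux in
/-- **`T_J` is cut out of the Tits cone `T` by half-spaces**:
`T_J = T ∩ P` where `T = T_{{1,…,l}}` is the Tits cone and
`P = {x : ⟨w(e i), x⟩_B ≥ 0 for all w ∈ W_J, i ∉ J}`. -/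
theorem TJ_eq_tits_inter (l : ℕ) (hl : 2 ≤ l) (b : Fin l → Fin l → ℝ)
    (hsym : ∀ i j, i ≠ j → b i j = b j i) (hge : ∀ i j, i ≠ j → 2 ≤ b i j)
    (J : Set (Fin l)) :
    TJ l b J = TJ l b Set.univ ∩
      {x | ∀ w ∈ WJ l b J, ∀ i : Fin l, i ∉ J →
        0 ≤ bform l b (w.mulVec (Pi.single i 1)) x} := by
  apply Set.Subset.antisymm
  · rintro y ⟨w, hw, x, hx, rfl⟩
    obtain ⟨L, hLJ, rfl⟩ := exists_list_of_mem J hw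
    constructor
    · exact ⟨wprod l b L, wprod_mem Set.univ L (fun x _ => Set.mem_univ x), x, hx, rfl⟩
    · rintro u hu i hiJ
      obtain ⟨Lu, hLu, rfl⟩ := exists_list_of_mem J hu
      show 0 ≤ bform l b ((wprod l b Lu) *ᵥ Pi.single i 1) ((wprod l b L) *ᵥ x)
      rw [bform_wprod_right hsym, Matrix.mulVec_mulVec, ← wprod_append, ← wprod_red]
      apply bform_nonneg_of hsym hx
      apply lemA hge
      · exact chain'_red _
      · intro h hgl
        have hmem : (red (L.reverse ++ Lu)).getLast h ∈ L.reverse ++ Lu :=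
          mem_of_mem_red _ _ (List.getLast_mem h)
        rcases List.mem_append.mp hmem with h1 | h2
        · exact hiJ (hgl ▸ hLJ _ (List.mem_reverse.mp h1))
        · exact hiJ (hgl ▸ hLu _ h2)
  · rintro y ⟨⟨w, hw, x, hx, rfl⟩, hP⟩
    obtain ⟨L, -, rfl⟩ := exists_list_of_mem Set.univ hw
    rw [← wprod_red]
    apply key hsym hge J (red L) (chain'_red L) x hx
    intro u hu i hi
    rw [wprod_red]
    exact hP u hu i hi
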